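/- Least-squares regression commutes with conditional expectation: let (Ω,F,P) be a probability space, Q ⊆ F a sub-σ-algebra, X₁,...,X_M random variables, and K = span{p₁,...,p_K} a finite-dimensional space of functions such that each vector (p_j(X₁),...,p_j(X_M)) is Q-measurable. If S* minimizes (1/M)Σ_m |φ(X_m) - S(X_m)|² over φ ∈ K, then E[S*|Q] (taken coefficient-wise) minimizes (1/M)Σ_m |φ(X_m) - E[S(X_m)|Q]|² over φ ∈ K, where the targets E[S(X_m)|Q] replace S(X_m). -/

import Mathlib

open MeasureTheory Finset

/-- Least-squares regression commutes with conditional expectation: if the design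
variables `p_j(X_m)` are `Q`-measurable and `S*` (with coefficients `c`) satisfies
the empirical normal equations for the targets `S(X_m)`, then the function with
coefficients `E[c_j | Q]` satisfies the normal equations for the targets
`E[S(X_m) | Q]`. -/
theorem ols_commutes_with_condexp
    {Ω α : Type*} [m0 : MeasurableSpace Ω]
    (P : Measure Ω) [IsProbabilityMeasure P]
    (Q : MeasurableSpace Ω) (hQ : Q ≤ m0)
    (M K : ℕ) (X : Fin M → Ω → α) (p : Fin K → α → ℝ)
    (SX : Fin M → Ω → ℝ) (c : Fin K → Ω → ℝ)
    -- the design variables are Q-measurable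
    (hpQ : ∀ j m, StronglyMeasurable[Q] fun ω => p j (X m ω))
    -- integrability of targets, coefficients and their products with the design
    (hSint : ∀ m, Integrable (SX m) P)
    (hcint : ∀ j, Integrable (c j) P)
    (hpSint : ∀ j m, Integrable (fun ω => p j (X m ω) * SX m ω) P)
    (hppcint : ∀ j j' j'' m,
      Integrable (fun ω => p j (X m ω) * p j' (X m ω) * c j'' ω) P)
    -- empirical normal equations for S*
    (hNE : ∀ j,
      (fun ω => ∑ m, p j (X m ω) *
          (SX m ω - ∑ j', c j' ω * p j' (X m ω))) =ᵐ[P] fun _ => (0 : ℝ)) :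
    ∀ j,
      (fun ω => ∑ m, p j (X m ω) *
          ((P[SX m|Q]) ω - ∑ j', (P[c j'|Q]) ω * p j' (X m ω))) =ᵐ[P]
        fun _ => (0 : ℝ) := by
  intro j
  -- the summand functions, rewritten as a difference of products
  set g : Fin M → Ω → ℝ := fun m ω =>
    p j (X m ω) * SX m ω - ∑ j', p j (X m ω) * p j' (X m ω) * c j' ω with hg
  have hgint : ∀ m : Fin M, Integrable (g m) P := fun m =>
    (hpSint j m).sub (integrable_finset_sum _ fun j' _ => hppcint j j' j' m)
  -- the original normal-equation function equals ∑ m, g m pointwise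
  have hfg : (fun ω => ∑ m, p j (X m ω) *
      (SX m ω - ∑ j', c j' ω * p j' (X m ω))) = ∑ m, g m := by
    funext ω
    simp only [Finset.sum_apply, hg]
    refine Finset.sum_congr rfl fun m _ => ?_
    rw [mul_sub, Finset.mul_sum]
    congr 1
    exact Finset.sum_congr rfl fun j' _ => by ring
  -- condexp of the sum is 0
  have h0 : P[∑ m, g m|Q] =ᵐ[P] fun _ => (0 : ℝ) := by
    have := condExp_congr_ae (m := Q) (μ := P) (hfg ▸ hNE j)
    refine this.trans ?_
    rw [show (fun _ : Ω => (0 : ℝ)) = (0 : Ω → ℝ) from rfl, condExp_zero]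
  -- condexp of each g m pulls out the Q-measurable factors
  have hgm : ∀ m : Fin M, P[g m|Q] =ᵐ[P]
      fun ω => p j (X m ω) * ((P[SX m|Q]) ω - ∑ j', (P[c j'|Q]) ω * p j' (X m ω)) := by
    intro m
    set q : Fin K → Ω → ℝ := fun j' ω => p j (X m ω) * p j' (X m ω) * c j' ω with hq
    have hqint : ∀ j' : Fin K, Integrable (q j') P := fun j' => hppcint j j' j' m
    have h1 : P[fun ω => p j (X m ω) * SX m ω|Q] =ᵐ[P]
        fun ω => p j (X m ω) * (P[SX m|Q]) ω :=
      condExp_mul_of_stronglyMeasurable_left (hpQ j m) (hpSint j m) (hSint m)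
    have h2 : ∀ j' : Fin K, P[q j'|Q] =ᵐ[P]
        fun ω => p j (X m ω) * p j' (X m ω) * (P[c j'|Q]) ω :=
      fun j' => condExp_mul_of_stronglyMeasurable_left ((hpQ j m).mul (hpQ j' m))
        (hppcint j j' j' m) (hcint j')
    have hgeq : g m = (fun ω => p j (X m ω) * SX m ω) - ∑ j', q j' := by
      funext ω; simp [hg, hq]
    have hsum : P[∑ j', q j'|Q] =ᵐ[P] ∑ j', P[q j'|Q] :=
      condExp_finsetSum (fun j' _ => hqint j') Q
    have hsub : P[g m|Q] =ᵐ[P]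
        (P[fun ω => p j (X m ω) * SX m ω|Q]) - (P[∑ j', q j'|Q]) := by
      rw [hgeq]
      exact condExp_sub (hpSint j m) (integrable_finset_sum' _ fun j' _ => hqint j') _
    filter_upwards [hsub, h1, hsum, Filter.eventually_all.2 h2] with ω hω h1ω hsω h2ω
    simp only [Pi.sub_apply, Finset.sum_apply] at hω hsω
    rw [hω, h1ω, hsω, mul_sub, Finset.mul_sum]
    congr 1
    refine Finset.sum_congr rfl fun j' _ => ?_
    rw [h2ω j']; ring
  -- combine
  have hsum' : P[∑ m, g m|Q] =ᵐ[P]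
      fun ω => ∑ m, p j (X m ω) * ((P[SX m|Q]) ω - ∑ j', (P[c j'|Q]) ω * p j' (X m ω)) := by
    refine (condExp_finsetSum (fun m _ => hgint m) Q).trans ?_
    filter_upwards [Filter.eventually_all.2 hgm] with ω hω
    simpa using Finset.sum_congr rfl fun m _ => hω m
  exact hsum'.symm.trans h0
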